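/- Let f be Venkatachala's greedy sequence and W the Wythoff swap sequence. Then W(n) = f(n+1) − 1 for all n ≥ 1. -/

import Mathlib

noncomputable def vL (n : ℕ) : ℕ := ⌊(n:ℝ) * Real.goldenRatio⌋₊
noncomputable def vU (n : ℕ) : ℕ := ⌊(n:ℝ) * Real.goldenRatio ^ 2⌋₊

lemma vL_lb (k : ℕ) (hk : k ≠ 0) : (vL k : ℝ) < (k:ℝ) * Real.goldenRatio := by
  refine (Nat.floor_le (by positivity)).lt_of_ne ?_
  exact fun h => (Real.goldenRatio_irrational.natCast_mul hk) ⟨vL k, by push_cast; exact h⟩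

lemma vL_ub (k : ℕ) : (k:ℝ) * Real.goldenRatio < vL k + 1 := Nat.lt_floor_add_one _

lemma vLU (k : ℕ) : vU k = vL k + k := by
  unfold vU vL
  rw [Real.goldenRatio_sq, mul_add, mul_one, Nat.floor_add_natCast (by positivity)]

lemma vL_strictMono : StrictMono vL := by
  intro j k h
  unfold vL
  have h1 : (j:ℝ) * Real.goldenRatio + 1 ≤ (k:ℝ) * Real.goldenRatio := by
    have : (j:ℝ) + 1 ≤ k := by exact_mod_cast h
    nlinarith [Real.one_lt_goldenRatio, this]
  have hfl : (⌊(j:ℝ) * Real.goldenRatio⌋₊ : ℝ) ≤ (j:ℝ) * Real.goldenRatio :=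
    Nat.floor_le (by positivity)
  have h2 : ((⌊(j:ℝ) * Real.goldenRatio⌋₊ + 1 : ℕ) : ℝ) ≤ (k:ℝ) * Real.goldenRatio := by
    push_cast; linarith
  have := Nat.le_floor h2
  omega

lemma vL_le (k : ℕ) : k ≤ vL k := by
  apply Nat.le_floor
  nlinarith [Real.one_lt_goldenRatio, Nat.cast_nonneg (α := ℝ) k]

lemma vL_lt_iff (j m : ℕ) : vL j < m ↔ (j:ℝ) * Real.goldenRatio < m := by
  unfold vL
  rw [Nat.floor_lt (by positivity)]

lemma vU_irr (k : ℕ) (hk : k ≠ 0) : Irrational ((k:ℝ) * Real.goldenRatio ^ 2) := by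
  have h3 : (k:ℝ) * Real.goldenRatio ^ 2 = (k:ℝ) * Real.goldenRatio + k := by
    rw [Real.goldenRatio_sq]; ring
  rw [h3]
  exact ((Real.goldenRatio_irrational.natCast_mul hk).add_natCast k)

-- disjointness
lemma vLU_disjoint (j k : ℕ) (hj : 1 ≤ j) (hk : 1 ≤ k) : vL j ≠ vU k := by
  intro h
  have hn : ((vL j : ℕ) : ℝ) = ((vU k : ℕ) : ℝ) := by rw [h]
  set n := vU k with hndef
  have hjlb : (n:ℝ) < (j:ℝ) * Real.goldenRatio := by
    calc (n:ℝ) = vL j := hn.symm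
    _ < _ := vL_lb j (by omega)
  have hjub : (j:ℝ) * Real.goldenRatio < n + 1 := by
    have := vL_ub j; rw [h] at this; exact this
  have hklb : (n:ℝ) < (k:ℝ) * Real.goldenRatio ^ 2 := by
    refine (Nat.floor_le (by positivity)).lt_of_ne ?_
    exact fun h2 => (vU_irr k (by omega)) ⟨n, by push_cast; exact h2⟩
  have hkub : (k:ℝ) * Real.goldenRatio ^ 2 < n + 1 := Nat.lt_floor_add_one _
  have hg : Real.goldenRatio ^ 2 = Real.goldenRatio + 1 := Real.goldenRatio_sq
  have hjk1 : (n:ℝ) < (j:ℝ) + (k:ℝ) := by nlinarith [Real.goldenRatio_pos, Real.one_lt_goldenRatio]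
  have hjk2 : ((j:ℝ) + (k:ℝ)) < (n:ℝ) + 1 := by nlinarith [Real.goldenRatio_pos, Real.one_lt_goldenRatio]
  have e1 : n < j + k := by exact_mod_cast hjk1
  have e2 : j + k < n + 1 := by exact_mod_cast hjk2
  omega

-- coverage
lemma vLU_cover (n : ℕ) (hn : 1 ≤ n) :
    (∃ k, 1 ≤ k ∧ vL k = n) ∨ (∃ k, 1 ≤ k ∧ vU k = n) := by
  have hg : Real.goldenRatio ^ 2 = Real.goldenRatio + 1 := Real.goldenRatio_sq
  have hg1 : (1:ℝ) < Real.goldenRatio := Real.one_lt_goldenRatio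
  have hnR : (1:ℝ) ≤ n := by exact_mod_cast hn
  obtain ⟨k, hk⟩ : ∃ k, k = ⌊((n:ℝ) + 1) * (Real.goldenRatio - 1)⌋₊ := ⟨_, rfl⟩
  have hirr : Irrational (((n:ℝ) + 1) * (Real.goldenRatio - 1)) := by
    have he : ((n:ℝ) + 1) * (Real.goldenRatio - 1) = ((n+1 : ℕ) : ℝ) * Real.goldenRatio - ((n+1:ℕ) : ℝ) := by
      push_cast; ring
    rw [he]
    exact (Real.goldenRatio_irrational.natCast_mul (show n+1 ≠ 0 by omega)).sub_natCast _
  have hklt : (k:ℝ) < ((n:ℝ) + 1) * (Real.goldenRatio - 1) := by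
    rw [hk]
    refine (Nat.floor_le (by nlinarith)).lt_of_ne ?_
    exact fun h => hirr ⟨_, by push_cast; exact h⟩
  have hkgt : ((n:ℝ) + 1) * (Real.goldenRatio - 1) < k + 1 := by rw [hk]; exact Nat.lt_floor_add_one _
  have hginv : (Real.goldenRatio - 1) * Real.goldenRatio = 1 := by nlinarith
  have h1 : (k:ℝ) * Real.goldenRatio < n + 1 := by nlinarith
  have h2 : (n:ℝ) + 1 < ((k:ℝ) + 1) * Real.goldenRatio := by nlinarith
  by_cases hc : (n:ℝ) < (k:ℝ) * Real.goldenRatio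
  · left
    refine ⟨k, ?_, ?_⟩
    · rcases Nat.eq_zero_or_pos k with h0 | h0
      · exfalso; rw [h0] at hc; push_cast at hc; linarith
      · exact h0
    · unfold vL
      rw [Nat.floor_eq_iff (by positivity)]
      exact ⟨hc.le, by push_cast; linarith⟩
  · right
    push_neg at hc
    have hcs : (k:ℝ) * Real.goldenRatio < n := by
      rcases hc.lt_or_eq with h | h
      · exact h
      · exfalso
        rcases Nat.eq_zero_or_pos k with h0 | h0
        · rw [h0] at h; push_cast at h; linarith
        · exact (Real.goldenRatio_irrational.natCast_mul (show k ≠ 0 by omega)) ⟨n, by push_cast; exact h.symm⟩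
    have hkltn : k < n := by
      have : (k:ℝ) < n := by nlinarith
      exact_mod_cast this
    refine ⟨n - k, by omega, ?_⟩
    unfold vU
    have hcast : ((n - k : ℕ) : ℝ) = (n:ℝ) - k := by
      push_cast [Nat.cast_sub hkltn.le]; ring
    rw [Nat.floor_eq_iff (by positivity), hcast, hg]
    constructor
    · nlinarith
    · nlinarith

-- the key iff: vL j < vU k ↔ j ≤ vL k
lemma vL_lt_vU_iff (j k : ℕ) (hj : 1 ≤ j) (hk : 1 ≤ k) : vL j < vU k ↔ j ≤ vL k := by
  have hg : Real.goldenRatio ^ 2 = Real.goldenRatio + 1 := Real.goldenRatio_sq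
  have hg1 : (1:ℝ) < Real.goldenRatio := Real.one_lt_goldenRatio
  have hU : vU k = vL k + k := vLU k
  have hLlb : (vL k : ℝ) < k * Real.goldenRatio := vL_lb k (by omega)
  have hLub : (k:ℝ) * Real.goldenRatio < vL k + 1 := vL_ub k
  rw [vL_lt_iff j (vU k)]
  constructor
  · intro h
    rw [hU] at h
    push_cast at h
    by_contra hcon
    push_neg at hcon
    have : (vL k : ℝ) + 1 ≤ j := by exact_mod_cast hcon
    nlinarith
  · intro h
    rw [hU]
    push_cast
    have : (j:ℝ) ≤ vL k := by exact_mod_cast h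
    nlinarith
noncomputable def vC (n : ℕ) : ℕ := ((Finset.Icc 1 n).filter (fun j => vL j < n)).card

lemma vC_L (k : ℕ) (hk : 1 ≤ k) : vC (vL k) = k - 1 := by
  unfold vC
  have he : (Finset.Icc 1 (vL k)).filter (fun j => vL j < vL k) = Finset.Icc 1 (k-1) := by
    ext j
    simp only [Finset.mem_filter, Finset.mem_Icc]
    constructor
    · rintro ⟨⟨h1, _⟩, h3⟩
      have := vL_strictMono.lt_iff_lt.mp h3
      omega
    · rintro ⟨h1, h2⟩
      have hjk : j < k := by omega
      refine ⟨⟨h1, ?_⟩, vL_strictMono hjk⟩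
      have := vL_le k
      omega
  rw [he, Nat.card_Icc]
  omega

lemma vC_L1 (k : ℕ) (hk : 1 ≤ k) : vC (vL k + 1) = k := by
  unfold vC
  have he : (Finset.Icc 1 (vL k + 1)).filter (fun j => vL j < vL k + 1) = Finset.Icc 1 k := by
    ext j
    simp only [Finset.mem_filter, Finset.mem_Icc]
    constructor
    · rintro ⟨⟨h1, _⟩, h3⟩
      have : vL j ≤ vL k := by omega
      have := vL_strictMono.le_iff_le.mp this
      omega
    · rintro ⟨h1, h2⟩
      have h3 : vL j ≤ vL k := vL_strictMono.le_iff_le.mpr h2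
      have := vL_le k
      refine ⟨⟨h1, by omega⟩, by omega⟩
  rw [he, Nat.card_Icc]
  omega

lemma vC_U (k : ℕ) (hk : 1 ≤ k) : vC (vU k) = vL k := by
  unfold vC
  have hUL : vU k = vL k + k := vLU k
  have he : (Finset.Icc 1 (vU k)).filter (fun j => vL j < vU k) = Finset.Icc 1 (vL k) := by
    ext j
    simp only [Finset.mem_filter, Finset.mem_Icc]
    constructor
    · rintro ⟨⟨h1, _⟩, h3⟩
      exact ⟨h1, (vL_lt_vU_iff j k h1 hk).mp h3⟩
    · rintro ⟨h1, h2⟩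
      exact ⟨⟨h1, by omega⟩, (vL_lt_vU_iff j k h1 hk).mpr h2⟩
  rw [he, Nat.card_Icc]
  omega

lemma vC_U1 (k : ℕ) (hk : 1 ≤ k) : vC (vU k + 1) = vL k := by
  unfold vC
  have hUL : vU k = vL k + k := vLU k
  have he : (Finset.Icc 1 (vU k + 1)).filter (fun j => vL j < vU k + 1) = Finset.Icc 1 (vL k) := by
    ext j
    simp only [Finset.mem_filter, Finset.mem_Icc]
    constructor
    · rintro ⟨⟨h1, _⟩, h3⟩
      have h4 : vL j < vU k := by
        rcases Nat.lt_or_ge (vL j) (vU k) with h | h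
        · exact h
        · exfalso
          have : vL j = vU k := by omega
          exact vLU_disjoint j k h1 hk this
      exact ⟨h1, (vL_lt_vU_iff j k h1 hk).mp h4⟩
    · rintro ⟨h1, h2⟩
      have := (vL_lt_vU_iff j k h1 hk).mpr h2
      exact ⟨⟨h1, by omega⟩, by omega⟩
  rw [he, Nat.card_Icc]
  omega

lemma vC_one : vC 1 = 0 := by
  unfold vC
  have : (Finset.Icc 1 1).filter (fun j => vL j < 1) = ∅ := by
    ext j
    simp only [Finset.mem_filter, Finset.mem_Icc, Finset.notMem_empty, iff_false]
    rintro ⟨⟨h1, h2⟩, h3⟩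
    have := vL_le j
    omega
  rw [this]
  rfl

section WLemmas

variable (W : ℕ → ℕ) (hW0 : W 0 = 0)
  (hWL : ∀ k, 1 ≤ k → W (vL k) = vU k)
  (hWU : ∀ k, 1 ≤ k → W (vU k) = vL k)

include hWL hWU

lemma vW_cases (n : ℕ) (hn : 1 ≤ n) :
    (∃ k, 1 ≤ k ∧ n = vL k ∧ W n = vU k) ∨ (∃ k, 1 ≤ k ∧ n = vU k ∧ W n = vL k) := by
  rcases vLU_cover n hn with ⟨k, hk, h⟩ | ⟨k, hk, h⟩
  · exact Or.inl ⟨k, hk, h.symm, by rw [← h, hWL k hk]⟩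
  · exact Or.inr ⟨k, hk, h.symm, by rw [← h, hWU k hk]⟩

lemma vW_pos (n : ℕ) (hn : 1 ≤ n) : 1 ≤ W n := by
  rcases vW_cases W hWL hWU n hn with ⟨k, hk, _, h⟩ | ⟨k, hk, _, h⟩
  · rw [h]; have := vL_le k; have := vLU k; omega
  · rw [h]; have := vL_le k; omega

include hW0 in
lemma vW_invol (n : ℕ) : W (W n) = n := by
  rcases Nat.eq_zero_or_pos n with h0 | h0
  · rw [h0, hW0, hW0]
  · rcases vW_cases W hWL hWU n h0 with ⟨k, hk, hn, h⟩ | ⟨k, hk, hn, h⟩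
    · rw [h, hWU k hk, hn]
    · rw [h, hWL k hk, hn]

lemma vW_lt (k : ℕ) (hk : 2 ≤ k) : W (k - 1) < vL k := by
  rcases vW_cases W hWL hWU (k-1) (by omega) with ⟨j, hj, hn, h⟩ | ⟨j, hj, hn, h⟩
  · -- k-1 = vL j, W (k-1) = vU j = vL j + j = k-1+j
    rw [h, vLU j, ← hn]
    -- need k - 1 + j < vL k
    have hjlt : (j:ℝ) * Real.goldenRatio < k := by
      rw [← vL_lt_iff j k]
      omega
    have hginv : (Real.goldenRatio - 1) * Real.goldenRatio = 1 := by
      have := Real.goldenRatio_sq; nlinarith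
    have hgpos : (0:ℝ) < Real.goldenRatio := Real.goldenRatio_pos
    have hg1 : (1:ℝ) < Real.goldenRatio := Real.one_lt_goldenRatio
    have hjlt2 : (j:ℝ) < (k:ℝ) * Real.goldenRatio - k := by
      have h1 : (j:ℝ) * Real.goldenRatio * (Real.goldenRatio - 1) < (k:ℝ) * (Real.goldenRatio - 1) := by
        nlinarith
      have h2 : (j:ℝ) * Real.goldenRatio * (Real.goldenRatio - 1) = j := by nlinarith
      nlinarith
    have hub : (k:ℝ) * Real.goldenRatio < vL k + 1 := vL_ub k
    have : ((k - 1 + j : ℕ) : ℝ) < (vL k : ℝ) := by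
      push_cast [Nat.cast_sub (show 1 ≤ k by omega)]
      linarith
    exact_mod_cast this
  · -- k-1 = vU j, W (k-1) = vL j ≤ vU j = k-1 < k ≤ vL k
    rw [h]
    have h1 := vLU j
    have h2 := vL_le k
    omega

end WLemmas
lemma vSum (W f : ℕ → ℕ)
    (hWL : ∀ k, 1 ≤ k → W (vL k) = vU k)
    (hWU : ∀ k, 1 ≤ k → W (vU k) = vL k)
    (hf1 : f 1 = 1)
    (n : ℕ) (hyp : ∀ j, 1 ≤ j → j < n → f (j+1) = W j + 1) :
    ∑ i ∈ Finset.Icc 1 n, f i = n * (1 + vC n) := by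
  induction n with
  | zero => simp
  | succ n ih =>
    rw [Finset.sum_Icc_succ_top (by omega)]
    rcases Nat.eq_zero_or_pos n with h0 | h0
    · subst h0; simp [hf1, vC_one]
    · have hs := ih (fun j hj1 hj2 => hyp j hj1 (by omega))
      rw [hs, hyp n h0 (by omega)]
      rcases vW_cases W hWL hWU n h0 with ⟨k, hk, hn, hW⟩ | ⟨k, hk, hn, hW⟩
      · rw [hW, hn, vC_L k hk, vC_L1 k hk, vLU k]
        have h1 : 1 + (k-1) = k := by omega
        rw [h1]; ring
      · rw [hW, hn, vC_U k hk, vC_U1 k hk]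
        ring

/-- Venkatachala's greedy sequence and the Wythoff swap sequence:
with `f(1) = 1` and, for `n ≥ 2`, `f(n)` the least positive integer not among
`f(1), …, f(n−1)` such that `n` divides `f(1) + ⋯ + f(n)`, and `W` the
Wythoff swap sequence, one has `W(n) = f(n+1) − 1` for all `n ≥ 1`. -/
theorem wythoff_swap_eq_venkatachala_shifted
    (φ : ℝ) (hφ : φ = (1 + Real.sqrt 5) / 2)
    (L U : ℕ → ℕ)
    (hL : ∀ n : ℕ, L n = ⌊(n : ℝ) * φ⌋₊)
    (hU : ∀ n : ℕ, U n = ⌊(n : ℝ) * φ ^ 2⌋₊)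
    (W : ℕ → ℕ) (hW0 : W 0 = 0)
    (hWL : ∀ k : ℕ, 1 ≤ k → W (L k) = U k)
    (hWU : ∀ k : ℕ, 1 ≤ k → W (U k) = L k)
    (f : ℕ → ℕ) (hf1 : f 1 = 1)
    (hf : ∀ n : ℕ, 2 ≤ n →
      IsLeast {m : ℕ | 0 < m ∧ (∀ i ∈ Finset.Icc 1 (n - 1), f i ≠ m) ∧
        n ∣ ((∑ i ∈ Finset.Icc 1 (n - 1), f i) + m)} (f n)) :
    ∀ n : ℕ, 1 ≤ n → W n = f (n + 1) - 1 := by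
  have hLv : L = vL := funext fun n => by rw [hL n, hφ]; rfl
  have hUv : U = vU := funext fun n => by rw [hU n, hφ]; rfl
  subst hLv hUv
  have key : ∀ n, 1 ≤ n → f (n+1) = W n + 1 := by
    intro n
    induction n using Nat.strong_induction_on with
    | _ n IH =>
    intro hn
    have hsum : ∑ i ∈ Finset.Icc 1 n, f i = n * (1 + vC n) :=
      vSum W f hWL hWU hf1 n (fun j hj1 hj2 => IH j hj2 hj1)
    have hleast := hf (n+1) (by omega)
    simp only [Nat.add_sub_cancel] at hleast
    have hmem : 0 < W n + 1 ∧ (∀ i ∈ Finset.Icc 1 n, f i ≠ W n + 1) ∧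
        (n+1) ∣ ((∑ i ∈ Finset.Icc 1 n, f i) + (W n + 1)) := by
      refine ⟨by omega, ?_, ?_⟩
      · intro i hi heq
        rw [Finset.mem_Icc] at hi
        rcases Nat.lt_or_ge i 2 with h2 | h2
        · have hi1 : i = 1 := by omega
          rw [hi1, hf1] at heq
          have := vW_pos W hWL hWU n hn
          omega
        · have hIH : f i = W (i-1) + 1 := by
            have h := IH (i-1) (by omega) (by omega)
            have hi1 : i - 1 + 1 = i := by omega
            rwa [hi1] at h
          rw [hIH] at heq
          have hWW : W (i-1) = W n := by omega
          have hinv := vW_invol W hW0 hWL hWU (i-1)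
          rw [hWW, vW_invol W hW0 hWL hWU n] at hinv
          omega
      · rw [hsum]
        rcases vW_cases W hWL hWU n hn with ⟨k, hk, hn', hW⟩ | ⟨k, hk, hn', hW⟩
        · rw [hW, hn', vC_L k hk, vLU k]
          have h1 : 1 + (k-1) = k := by omega
          rw [h1]
          exact ⟨k+1, by ring⟩
        · rw [hW, hn', vC_U k hk]
          exact ⟨vL k + 1, by ring⟩
    have hlb : ∀ m, 0 < m → (∀ i ∈ Finset.Icc 1 n, f i ≠ m) →
        (n+1) ∣ ((∑ i ∈ Finset.Icc 1 n, f i) + m) → W n + 1 ≤ m := by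
      intro m hm0 hmnu hmdvd
      by_contra hcon
      push_neg at hcon
      have hd : (n+1) ∣ ((∑ i ∈ Finset.Icc 1 n, f i) + (W n + 1)) -
          ((∑ i ∈ Finset.Icc 1 n, f i) + m) := Nat.dvd_sub hmem.2.2 hmdvd
      have hde : ((∑ i ∈ Finset.Icc 1 n, f i) + (W n + 1)) -
          ((∑ i ∈ Finset.Icc 1 n, f i) + m) = W n + 1 - m := by omega
      rw [hde] at hd
      have hpos : 0 < W n + 1 - m := by omega
      have hge := Nat.le_of_dvd hpos hd
      rcases vW_cases W hWL hWU n hn with ⟨k, hk, hn', hW⟩ | ⟨k, hk, hn', hW⟩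
      · -- n = vL k, W n = vU k = n + k
        have hUL := vLU k
        have hkn : k ≤ n := by rw [hn']; exact vL_le k
        obtain ⟨q, hq⟩ := hd
        have hub : (n+1) * q < (n+1) * 2 := by
          calc (n+1)*q = W n + 1 - m := hq.symm
          _ ≤ 2*n+1 := by omega
          _ < (n+1)*2 := by omega
        have hq2 : q < 2 := Nat.lt_of_mul_lt_mul_left hub
        have hq1 : q = 1 := by
          rcases Nat.eq_zero_or_pos q with h | h
          · exfalso; rw [h, Nat.mul_zero] at hq; omega
          · omega
        rw [hq1, Nat.mul_one] at hq
        have hmk : m = k := by omega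
        rcases Nat.lt_or_ge k 2 with hk2 | hk2
        · have hk1 : k = 1 := by omega
          have h1 := hmnu 1 (by rw [Finset.mem_Icc]; omega)
          rw [hf1] at h1; omega
        · have hj1 : 1 ≤ W (k-1) := vW_pos W hWL hWU (k-1) (by omega)
          have hjlt : W (k-1) < n := by rw [hn']; exact vW_lt W hWL hWU k hk2
          have hIH := IH (W (k-1)) hjlt hj1
          rw [vW_invol W hW0 hWL hWU (k-1)] at hIH
          have h2 := hmnu (W (k-1) + 1) (by rw [Finset.mem_Icc]; omega)
          omega
      · -- n = vU k: W n = vL k < n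
        have hUL := vLU k
        have hWn : W n < n := by rw [hW, hn']; omega
        omega
    have h1 : f (n+1) ≤ W n + 1 := hleast.2 hmem
    have h2 : W n + 1 ≤ f (n+1) := by
      obtain ⟨ha, hb, hc⟩ := hleast.1
      exact hlb (f (n+1)) ha hb hc
    omega
  intro n hn
  rw [key n hn]
  omega
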